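/- Let q ∈ ℚ with [k]_q ≠ 0 for all k ≥ 1, and fix N ≥ 1. Define P n = [N+n]_q!/[N]_q! (a constant polynomial in ℚ[x]) and Q n (x) = [N+n]_q! * ∑_{k=0}^n x^k/[N+k]_q!. Then for n ≥ 2: P n = ([N+n]_q + x) * P (n-1) - [N+n-1]_q * x * P (n-2) and Q n = ([N+n]_q + x) * Q (n-1) - [N+n-1]_q * x * Q (n-2), with P 0 = Q 0 = 1, P 1 = [N+1]_q, Q 1 = [N+1]_q + x. -/
import Mathlib


open Finset Polynomial

/-- The `q`-integer `[n]_q = 1 + q + ⋯ + q^{n-1}`. -/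
def qint (q : ℚ) (n : ℕ) : ℚ := ∑ i ∈ Finset.range n, q ^ i

/-- The `q`-factorial `[n]_q! = [1]_q [2]_q ⋯ [n]_q`. -/
def qfact (q : ℚ) (n : ℕ) : ℚ := ∏ k ∈ Finset.Icc 1 n, qint q k

lemma qfact_succ (q : ℚ) (n : ℕ) : qfact q (n + 1) = qfact q n * qint q (n + 1) := by
  unfold qfact
  rw [Finset.prod_Icc_succ_top (by omega : 1 ≤ n + 1)]

lemma qfact_ne_zero (q : ℚ) (hq : ∀ k : ℕ, 1 ≤ k → qint q k ≠ 0) (n : ℕ) :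
    qfact q n ≠ 0 := by
  unfold qfact
  exact Finset.prod_ne_zero_iff.mpr fun k hk => hq k (Finset.mem_Icc.mp hk).1

theorem qBernoulli_convergent_recurrences (q : ℚ)
    (hq : ∀ k : ℕ, 1 ≤ k → qint q k ≠ 0) (N : ℕ) (hN : 1 ≤ N)
    (P Q : ℕ → Polynomial ℚ)
    (hP : ∀ n : ℕ, P n = Polynomial.C (qfact q (N + n) / qfact q N))
    (hQ : ∀ n : ℕ, Q n = Polynomial.C (qfact q (N + n)) *
      ∑ k ∈ Finset.range (n + 1), Polynomial.C (1 / qfact q (N + k)) * Polynomial.X ^ k) :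
    (∀ n : ℕ, 2 ≤ n →
      P n = (Polynomial.C (qint q (N + n)) + Polynomial.X) * P (n - 1)
        - Polynomial.C (qint q (N + n - 1)) * Polynomial.X * P (n - 2)) ∧
    (∀ n : ℕ, 2 ≤ n →
      Q n = (Polynomial.C (qint q (N + n)) + Polynomial.X) * Q (n - 1)
        - Polynomial.C (qint q (N + n - 1)) * Polynomial.X * Q (n - 2)) ∧
    P 0 = 1 ∧ Q 0 = 1 ∧ P 1 = Polynomial.C (qint q (N + 1)) ∧
    Q 1 = Polynomial.C (qint q (N + 1)) + Polynomial.X := by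
  have hN0 : qfact q N ≠ 0 := qfact_ne_zero q hq N
  refine ⟨?_, ?_, ?_, ?_, ?_, ?_⟩
  · -- recurrence for P
    intro n hn
    obtain ⟨m, rfl⟩ := Nat.exists_eq_add_of_le hn
    rw [show 2 + m = m + 1 + 1 from by omega]
    rw [show m + 1 + 1 - 1 = m + 1 from by omega, show m + 1 + 1 - 2 = m from by omega,
      show N + (m + 1 + 1) - 1 = N + m + 1 from by omega,
      show N + (m + 1 + 1) = N + m + 1 + 1 from by omega]
    rw [hP, hP, hP]
    rw [show N + (m + 1 + 1) = N + m + 1 + 1 from by omega,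
      show N + (m + 1) = N + m + 1 from by omega]
    rw [qfact_succ q (N + m + 1), qfact_succ q (N + m)]
    rw [show qfact q (N + m) * qint q (N + m + 1) * qint q (N + m + 1 + 1) / qfact q N
        = qint q (N + m + 1 + 1) * (qint q (N + m + 1) * (qfact q (N + m) / qfact q N))
        from by ring,
      show qfact q (N + m) * qint q (N + m + 1) / qfact q N
        = qint q (N + m + 1) * (qfact q (N + m) / qfact q N) from by ring]
    simp only [map_mul]
    ring
  · -- recurrence for Q
    intro n hn
    obtain ⟨m, rfl⟩ := Nat.exists_eq_add_of_le hn
    rw [show 2 + m = m + 1 + 1 from by omega]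
    rw [show m + 1 + 1 - 1 = m + 1 from by omega, show m + 1 + 1 - 2 = m from by omega,
      show N + (m + 1 + 1) - 1 = N + m + 1 from by omega,
      show N + (m + 1 + 1) = N + m + 1 + 1 from by omega]
    rw [hQ, hQ, hQ]
    rw [Finset.sum_range_succ, Finset.sum_range_succ]
    rw [show N + (m + 1 + 1) = N + m + 1 + 1 from by omega,
      show N + (m + 1) = N + m + 1 from by omega]
    set S := ∑ k ∈ Finset.range (m + 1), Polynomial.C (1 / qfact q (N + k)) * Polynomial.X ^ k
      with hS
    have h1 : qfact q (N + m + 1) ≠ 0 := qfact_ne_zero q hq _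
    have h2 : qfact q (N + m + 1 + 1) ≠ 0 := qfact_ne_zero q hq _
    have h3 : Polynomial.C (qfact q (N + m + 1)) * Polynomial.C (1 / qfact q (N + m + 1))
        = (1 : Polynomial ℚ) := by
      rw [← Polynomial.C_mul, mul_one_div, div_self h1, Polynomial.C_1]
    have h4 : Polynomial.C (qfact q (N + m + 1 + 1)) * Polynomial.C (1 / qfact q (N + m + 1 + 1))
        = (1 : Polynomial ℚ) := by
      rw [← Polynomial.C_mul, mul_one_div, div_self h2, Polynomial.C_1]
    have h1p : Polynomial.C (qfact q (N + m + 1 + 1))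
        = Polynomial.C (qint q (N + m + 1 + 1)) * Polynomial.C (qfact q (N + m + 1)) := by
      rw [← Polynomial.C_mul, qfact_succ q (N + m + 1), mul_comm]
    have h2p : Polynomial.C (qfact q (N + m + 1))
        = Polynomial.C (qint q (N + m + 1)) * Polynomial.C (qfact q (N + m)) := by
      rw [← Polynomial.C_mul, qfact_succ q (N + m), mul_comm]
    linear_combination
      (S + Polynomial.C (1 / qfact q (N + m + 1)) * Polynomial.X ^ (m + 1)) * h1p
      + Polynomial.X ^ (m + 1 + 1) * h4 - Polynomial.X ^ (m + 1 + 1) * h3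
      - Polynomial.X * S * h2p
  · rw [hP, Nat.add_zero, div_self hN0, Polynomial.C_1]
  · rw [hQ]
    simp only [zero_add, Finset.range_one, Finset.sum_singleton, pow_zero, mul_one,
      Nat.add_zero]
    rw [← Polynomial.C_mul, mul_one_div, div_self hN0, Polynomial.C_1]
  · rw [hP, qfact_succ]
    rw [show qfact q N * qint q (N + 1) / qfact q N = qint q (N + 1) from by
      field_simp]
  · rw [hQ]
    rw [Finset.sum_range_succ, Finset.sum_range_one, pow_zero, mul_one, pow_one, Nat.add_zero]
    have h1 : qfact q (N + 1) ≠ 0 := qfact_ne_zero q hq _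
    have h3 : Polynomial.C (qfact q (N + 1)) * Polynomial.C (1 / qfact q (N + 1))
        = (1 : Polynomial ℚ) := by
      rw [← Polynomial.C_mul, mul_one_div, div_self h1, Polynomial.C_1]
    have key : qfact q (N + 1) * (1 / qfact q N) = qint q (N + 1) := by
      rw [qfact_succ]; field_simp
    rw [show N + 0 = N from rfl, mul_add, ← Polynomial.C_mul, key, ← mul_assoc, h3, one_mul]
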